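/- Let n₀, n₁, n₂ be natural numbers, let T = (Fin n₀ → ℂˣ) × (Fin n₁ → ℂˣ) × (Fin n₂ → ℂˣ × ℂˣ), regarded as a group acting on itself by multiplication, and let σ : T → T be the automorphism σ(x, y, z) = (i ↦ conj(xᵢ), j ↦ conj(yⱼ)⁻¹, k ↦ (conj(z_k.2), conj(z_k.1))). For each sign vector ε : Fin n₁ → {±1} define μ_ε : T → T by μ_ε(x, y, z) = (i ↦ conj(xᵢ), j ↦ ε(j)·conj(yⱼ)⁻¹, k ↦ (conj(z_k.2), conj(z_k.1))). Then each μ_ε is a σ-equivariant real structure on T; two maps μ_ε, μ_{ε'} are equivalent (conjugate by a translation of T) only if ε = ε'; and every σ-equivariant real structure on T is equivalent to μ_ε for some ε. In particular there are exactly 2^{n₁} equivalence classes of σ-equivariant real structures on T. -/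

import Mathlib

/-- The torus `(ℂˣ)^{n₀} × (ℂˣ)^{n₁} × (ℂˣ × ℂˣ)^{n₂}`. -/
abbrev TorusT (n₀ n₁ n₂ : ℕ) : Type :=
  (Fin n₀ → ℂˣ) × (Fin n₁ → ℂˣ) × (Fin n₂ → ℂˣ × ℂˣ)

/-- Complex conjugation on `ℂˣ`. -/
noncomputable def conjU : ℂˣ →* ℂˣ := Units.map (starRingEnd ℂ).toMonoidHom

/-- The real group structure `σ₀^{×n₀} × σ₁^{×n₁} × σ₂^{×n₂}` on the torus:
`γ(x, y, z) = (i ↦ conj (xᵢ), j ↦ conj (yⱼ)⁻¹, k ↦ (conj (z_k).2, conj (z_k).1))`. -/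
noncomputable def torusGamma (n₀ n₁ n₂ : ℕ) : TorusT n₀ n₁ n₂ →* TorusT n₀ n₁ n₂ where
  toFun t :=
    (fun i => conjU (t.1 i),
     fun j => (conjU (t.2.1 j))⁻¹,
     fun k => (conjU ((t.2.2 k).2), conjU ((t.2.2 k).1)))
  map_one' := by
    refine Prod.ext ?_ (Prod.ext ?_ ?_) <;> funext x <;> simp
  map_mul' a b := by
    refine Prod.ext ?_ (Prod.ext ?_ ?_) <;> funext x <;>
      simp [mul_inv, Prod.ext_iff, mul_comm]

/-- A `σ`-equivariant real structure on a `G`-set `X`: a map `μ : X → X` with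
`μ ∘ μ = id` and `μ(g·x) = σ(g)·μ(x)`. -/
def IsRealStructureOn {G X : Type*} [Group G] [MulAction G X] (σ : G →* G)
    (μ : X → X) : Prop :=
  (∀ x, μ (μ x) = x) ∧ ∀ (g : G) (x : X), μ (g • x) = σ g • μ x

/-- Equivalence of real structures on a `G`-set `X`: `μ ∼ μ'` iff `μ' = ψ ∘ μ ∘ ψ⁻¹`
for some `G`-equivariant bijection `ψ` of `X`. -/
def equivRealStructures (G : Type*) {X : Type*} [Group G] [MulAction G X]
    (μ μ' : X → X) : Prop :=
  ∃ ψ : Equiv.Perm X, (∀ (g : G) (x : X), ψ (g • x) = g • ψ x) ∧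
    ∀ x : X, μ' x = ψ (μ (ψ.symm x))

/-- For a sign vector `ε : Fin n₁ → {±1}`, the map
`μ_ε(x, y, z) = (i ↦ conj (xᵢ), j ↦ ε(j)·conj (yⱼ)⁻¹, k ↦ (conj (z_k).2, conj (z_k).1))`
on the torus. -/
noncomputable def muEps (n₀ n₁ n₂ : ℕ) (ε : Fin n₁ → ℤˣ) :
    TorusT n₀ n₁ n₂ → TorusT n₀ n₁ n₂ := fun t =>
  (fun i => conjU (t.1 i),
   fun j => Units.map (Int.castRingHom ℂ).toMonoidHom (ε j) * (conjU (t.2.1 j))⁻¹,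
   fun k => (conjU ((t.2.2 k).2), conjU ((t.2.2 k).1)))

open Complex
lemma conjU_conjU (u : ℂˣ) : conjU (conjU u) = u := by
  ext; simp [conjU]
lemma conjU_coe (u : ℂˣ) : ((conjU u : ℂˣ) : ℂ) = (starRingEnd ℂ) (u : ℂ) := rfl

variable {n₀ n₁ n₂ : ℕ}
lemma gamma_sq (x : TorusT n₀ n₁ n₂) : torusGamma n₀ n₁ n₂ (torusGamma n₀ n₁ n₂ x) = x := by
  refine Prod.ext ?_ (Prod.ext ?_ ?_) <;> funext i <;>
    simp [torusGamma, conjU_conjU]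

lemma realStruct_c {μ : TorusT n₀ n₁ n₂ → TorusT n₀ n₁ n₂}
    (h : IsRealStructureOn (torusGamma n₀ n₁ n₂) μ) :
    (∀ x, μ x = torusGamma n₀ n₁ n₂ x * μ 1) ∧
      torusGamma n₀ n₁ n₂ (μ 1) * μ 1 = 1 := by
  have h1 : ∀ x, μ x = torusGamma n₀ n₁ n₂ x * μ 1 := fun x => by
    have := h.2 x 1
    simpa [smul_eq_mul] using this
  refine ⟨h1, ?_⟩
  have := h.1 1
  rw [h1 (μ 1)] at this
  exact this

lemma realStruct_of (c : TorusT n₀ n₁ n₂) (hc : torusGamma n₀ n₁ n₂ c * c = 1) :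
    IsRealStructureOn (torusGamma n₀ n₁ n₂) (fun x => torusGamma n₀ n₁ n₂ x * c) := by
  constructor
  · intro x
    show torusGamma n₀ n₁ n₂ (torusGamma n₀ n₁ n₂ x * c) * c = x
    rw [map_mul, mul_assoc, hc, mul_one, gamma_sq]
  · intro g x
    simp [smul_eq_mul, map_mul, mul_assoc]

lemma muEps_eq (ε : Fin n₁ → ℤˣ) (x : TorusT n₀ n₁ n₂) :
    muEps n₀ n₁ n₂ ε x = torusGamma n₀ n₁ n₂ x * muEps n₀ n₁ n₂ ε 1 := by
  refine Prod.ext ?_ (Prod.ext ?_ ?_) <;> funext i <;>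
    simp [muEps, torusGamma, mul_comm, Prod.ext_iff]

lemma conjU_int (e : ℤˣ) :
    conjU (Units.map (Int.castRingHom ℂ).toMonoidHom e) =
      Units.map (Int.castRingHom ℂ).toMonoidHom e := by
  ext; simp [conjU]

lemma muEps_cocycle (ε : Fin n₁ → ℤˣ) :
    torusGamma n₀ n₁ n₂ (muEps n₀ n₁ n₂ ε 1) * muEps n₀ n₁ n₂ ε 1 = 1 := by
  refine Prod.ext ?_ (Prod.ext ?_ ?_) <;> funext i <;>
    simp [muEps, torusGamma, Prod.ext_iff, Units.ext_iff, conjU]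

lemma part1 (ε : Fin n₁ → ℤˣ) :
    IsRealStructureOn (torusGamma n₀ n₁ n₂) (muEps n₀ n₁ n₂ ε) := by
  have h := realStruct_of (muEps n₀ n₁ n₂ ε 1) (muEps_cocycle ε)
  have he : muEps n₀ n₁ n₂ ε = fun x => torusGamma n₀ n₁ n₂ x * muEps n₀ n₁ n₂ ε 1 :=
    funext (muEps_eq ε)
  rwa [← he] at h

lemma part2 (ε ε' : Fin n₁ → ℤˣ)
    (h : equivRealStructures (TorusT n₀ n₁ n₂) (muEps n₀ n₁ n₂ ε) (muEps n₀ n₁ n₂ ε')) :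
    ε = ε' := by
  obtain ⟨ψ, hψ, hf⟩ := h
  have hψx : ∀ x, ψ x = x * ψ 1 := fun x => by
    have := hψ x 1; simpa [smul_eq_mul] using this
  set d := ψ 1 with hd
  have hψs : ∀ x, ψ.symm x = x * d⁻¹ := fun x => by
    apply ψ.injective
    rw [ψ.apply_symm_apply, hψx, mul_assoc, inv_mul_cancel, mul_one]
  have key : muEps n₀ n₁ n₂ ε' 1 =
      (torusGamma n₀ n₁ n₂ d)⁻¹ * muEps n₀ n₁ n₂ ε 1 * d := by
    have h1 := hf 1
    rw [hψs 1, one_mul, hψx, muEps_eq ε, map_inv] at h1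
    exact h1
  funext j
  have hj := congrArg (fun t : TorusT n₀ n₁ n₂ => ((t.2.1 j : ℂˣ) : ℂ)) key
  simp [muEps, torusGamma, conjU] at hj
  set z := ((d.2.1 j : ℂˣ) : ℂ) with hzdef
  have hns : (starRingEnd ℂ) z * z = ((Complex.normSq z : ℝ) : ℂ) := by
    rw [mul_comm]; exact Complex.mul_conj z
  rw [mul_comm ((starRingEnd ℂ) z), mul_assoc, hns] at hj
  rcases Int.units_eq_one_or (ε j) with h1 | h1 <;>
    rcases Int.units_eq_one_or (ε' j) with h2 | h2 <;>
      rw [h1, h2] at hj ⊢ <;> try rfl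
  · exfalso
    simp at hj
    have : (-1 : ℝ) = Complex.normSq z := by exact_mod_cast hj
    linarith [Complex.normSq_nonneg z]
  · exfalso
    simp at hj
    have : (1 : ℝ) = -Complex.normSq z := by exact_mod_cast hj
    linarith [Complex.normSq_nonneg z]

open Complex in
lemma part3 (μ : TorusT n₀ n₁ n₂ → TorusT n₀ n₁ n₂)
    (hμ : IsRealStructureOn (torusGamma n₀ n₁ n₂) μ) :
    ∃ ε : Fin n₁ → ℤˣ, equivRealStructures (TorusT n₀ n₁ n₂) μ (muEps n₀ n₁ n₂ ε) := by
  obtain ⟨hx, hc⟩ := realStruct_c hμ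
  set c := μ 1 with hcdef
  have h0 : ∀ i, (starRingEnd ℂ) ((c.1 i : ℂ)) * (c.1 i : ℂ) = 1 := fun i => by
    have := congrArg (fun t : TorusT n₀ n₁ n₂ => ((t.1 i : ℂˣ) : ℂ)) hc
    simpa [torusGamma, conjU] using this
  have h1 : ∀ j, (starRingEnd ℂ) ((c.2.1 j : ℂ)) = (c.2.1 j : ℂ) := fun j => by
    have h := congrArg (fun t : TorusT n₀ n₁ n₂ => ((t.2.1 j : ℂˣ) : ℂ)) hc
    simp [torusGamma, conjU] at h
    have hne : (starRingEnd ℂ) ((c.2.1 j : ℂ)) ≠ 0 := by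
      simp [Units.ne_zero]
    exact (inv_mul_eq_one₀ hne).mp h
  have h2 : ∀ k, (starRingEnd ℂ) (((c.2.2 k).1 : ℂ)) * ((c.2.2 k).2 : ℂ) = 1 := fun k => by
    have := congrArg (fun t : TorusT n₀ n₁ n₂ => (((t.2.2 k).2 : ℂˣ) : ℂ)) hc
    simpa [torusGamma, conjU] using this
  -- the second-type coordinates are real
  have hwre : ∀ j, ((c.2.1 j : ℂ)) = (((c.2.1 j : ℂ).re : ℝ) : ℂ) := fun j =>
    (Complex.conj_eq_iff_re.mp (h1 j)).symm
  have hwne : ∀ j, (c.2.1 j : ℂ).re ≠ 0 := fun j => by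
    intro h
    have : ((c.2.1 j : ℂˣ) : ℂ) = 0 := by rw [hwre j, h]; simp
    exact Units.ne_zero _ this
  -- the sign vector
  set ε : Fin n₁ → ℤˣ := fun j => if 0 < (c.2.1 j : ℂ).re then 1 else -1 with hε
  have hrpos : ∀ j, 0 < (((ε j : ℤ) : ℝ)) / (c.2.1 j : ℂ).re := fun j => by
    rcases lt_or_gt_of_ne (hwne j) with h | h
    · have : ε j = -1 := by simp [hε, not_lt.mpr (le_of_lt h)]
      rw [this]
      push_cast
      exact div_pos_of_neg_of_neg (by norm_num) h
    · have : ε j = 1 := by simp [hε, h]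
      rw [this]
      push_cast
      exact div_pos one_pos h
  -- square roots for the first block
  have hsex : ∀ i, ∃ z : ℂ, z ^ 2 = (starRingEnd ℂ) ((c.1 i : ℂ)) := fun i =>
    IsAlgClosed.exists_pow_nat_eq _ two_pos
  choose s hs using hsex
  have hs0 : ∀ i, s i ≠ 0 := fun i => by
    intro h
    have := hs i
    rw [h] at this
    simp only [ne_eq, zero_pow, OfNat.ofNat_ne_zero, not_false_eq_true] at this
    exact (star_ne_zero.mpr (Units.ne_zero (c.1 i))) this.symm
  -- normSq (s i) = 1
  have hns1 : ∀ i, Complex.normSq (s i) = 1 := fun i => by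
    have ha : Complex.normSq ((c.1 i : ℂ)) = 1 := by
      have : ((Complex.normSq ((c.1 i : ℂ)) : ℝ) : ℂ) = 1 := by
        rw [← Complex.mul_conj ((c.1 i : ℂ)), mul_comm]; exact h0 i
      exact_mod_cast this
    have hsq : Complex.normSq (s i) ^ 2 = 1 := by
      rw [← map_pow, hs i, Complex.normSq_conj, ha]
    have hnn := Complex.normSq_nonneg (s i)
    nlinarith [sq_nonneg (Complex.normSq (s i) - 1), sq_nonneg (Complex.normSq (s i) + 1)]
  have hconjs : ∀ i, (starRingEnd ℂ) (s i) = (s i)⁻¹ := fun i => by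
    have : (starRingEnd ℂ) (s i) * s i = 1 := by
      rw [mul_comm, Complex.mul_conj, hns1 i]; norm_num
    exact eq_inv_of_mul_eq_one_left this
  -- the translation element d
  set d : TorusT n₀ n₁ n₂ :=
    (fun i => Units.mk0 (s i) (hs0 i),
     fun j => Units.mk0 ((Real.sqrt (((ε j : ℤ) : ℝ) / (c.2.1 j : ℂ).re) : ℝ) : ℂ)
       (by exact_mod_cast (Real.sqrt_pos.mpr (hrpos j)).ne'),
     fun k => (1, conjU ((c.2.2 k).1))) with hd
  have key : muEps n₀ n₁ n₂ ε 1 = (torusGamma n₀ n₁ n₂ d)⁻¹ * c * d := by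
    refine Prod.ext ?_ (Prod.ext ?_ ?_) <;> funext i
    · ext
      simp [muEps, torusGamma, conjU, hd]
      rw [hconjs i, inv_inv]
      have hring : s i * (c.1 i : ℂ) * s i = s i ^ 2 * (c.1 i : ℂ) := by ring
      rw [hring, hs i]
      exact (h0 i).symm
    · ext
      simp [muEps, torusGamma, conjU, hd]
      rw [hwre i]
      have hr : (((ε i : ℤ) : ℝ)) =
          Real.sqrt (((ε i : ℤ) : ℝ) / (c.2.1 i : ℂ).re) * (c.2.1 i : ℂ).re *
            Real.sqrt (((ε i : ℤ) : ℝ) / (c.2.1 i : ℂ).re) := by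
        have hm : Real.sqrt (((ε i : ℤ) : ℝ) / (c.2.1 i : ℂ).re) *
            Real.sqrt (((ε i : ℤ) : ℝ) / (c.2.1 i : ℂ).re) =
            ((ε i : ℤ) : ℝ) / (c.2.1 i : ℂ).re :=
          Real.mul_self_sqrt (hrpos i).le
        calc (((ε i : ℤ) : ℝ)) = (((ε i : ℤ) : ℝ) / (c.2.1 i : ℂ).re) * (c.2.1 i : ℂ).re :=
            (div_mul_cancel₀ _ (hwne i)).symm
          _ = _ := by linear_combination (-(c.2.1 i : ℂ).re) * hm
      exact_mod_cast congrArg (fun t : ℝ => (t : ℂ)) hr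
    · refine Prod.ext ?_ ?_ <;> ext <;> simp [muEps, torusGamma, conjU, hd]
      rw [mul_comm]
      exact (h2 i).symm
  refine ⟨ε, Equiv.mulRight d, fun g x => by simp [smul_eq_mul, mul_assoc], fun x => ?_⟩
  rw [muEps_eq, key]
  simp only [Equiv.coe_mulRight, Equiv.mulRight_symm, hx (x * d⁻¹), map_mul, map_inv]
  simp [mul_assoc]

lemma equiv_equivalence :
    Equivalence (fun μ μ' : {μ : TorusT n₀ n₁ n₂ → TorusT n₀ n₁ n₂ //
        IsRealStructureOn (torusGamma n₀ n₁ n₂) μ} =>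
      equivRealStructures (TorusT n₀ n₁ n₂) μ.1 μ'.1) := by
  constructor
  · intro μ; exact ⟨Equiv.refl _, fun g x => rfl, fun x => rfl⟩
  · rintro a b ⟨ψ, hψ, h⟩
    refine ⟨ψ.symm, fun g x => ?_, fun x => ?_⟩
    · apply ψ.injective; rw [hψ, ψ.apply_symm_apply, ψ.apply_symm_apply]
    · simp [h (ψ x)]
  · rintro a b cc ⟨ψ, hψ, h⟩ ⟨ψ', hψ', h'⟩
    refine ⟨ψ.trans ψ', fun g x => ?_, fun x => ?_⟩
    · simp only [Equiv.trans_apply]; rw [hψ, hψ']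
    · simp [h', h]


/-- **Example 2.2 (homogeneous toric case).** Let `T` be the torus
`(ℂˣ)^{n₀} × (ℂˣ)^{n₁} × (ℂˣ × ℂˣ)^{n₂}` acting on itself by multiplication, with the
real group structure `σ = σ₀^{×n₀} × σ₁^{×n₁} × σ₂^{×n₂}`. Then every `μ_ε` is a
`σ`-equivariant real structure on `T`; `μ_ε ∼ μ_{ε'}` only if `ε = ε'`; every
`σ`-equivariant real structure on `T` is equivalent to some `μ_ε`; and there are
exactly `2^{n₁}` equivalence classes of `σ`-equivariant real structures on `T`. -/
theorem torus_realStructures_classification (n₀ n₁ n₂ : ℕ) :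
    (∀ ε : Fin n₁ → ℤˣ,
      IsRealStructureOn (torusGamma n₀ n₁ n₂) (muEps n₀ n₁ n₂ ε)) ∧
    (∀ ε ε' : Fin n₁ → ℤˣ,
      equivRealStructures (TorusT n₀ n₁ n₂) (muEps n₀ n₁ n₂ ε) (muEps n₀ n₁ n₂ ε') →
        ε = ε') ∧
    (∀ μ : TorusT n₀ n₁ n₂ → TorusT n₀ n₁ n₂,
      IsRealStructureOn (torusGamma n₀ n₁ n₂) μ →
        ∃ ε : Fin n₁ → ℤˣ,
          equivRealStructures (TorusT n₀ n₁ n₂) μ (muEps n₀ n₁ n₂ ε)) ∧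
    Nat.card (Quot (fun μ μ' : {μ : TorusT n₀ n₁ n₂ → TorusT n₀ n₁ n₂ //
        IsRealStructureOn (torusGamma n₀ n₁ n₂) μ} =>
      equivRealStructures (TorusT n₀ n₁ n₂) μ.1 μ'.1)) = 2 ^ n₁ := by
  refine ⟨part1, part2, part3, ?_⟩
  have he := equiv_equivalence (n₀ := n₀) (n₁ := n₁) (n₂ := n₂)
  set r := fun μ μ' : {μ : TorusT n₀ n₁ n₂ → TorusT n₀ n₁ n₂ //
        IsRealStructureOn (torusGamma n₀ n₁ n₂) μ} =>
      equivRealStructures (TorusT n₀ n₁ n₂) μ.1 μ'.1 with hr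
  let f : (Fin n₁ → ℤˣ) → Quot r := fun ε => Quot.mk r ⟨muEps n₀ n₁ n₂ ε, part1 ε⟩
  have hbij : Function.Bijective f := by
    constructor
    · intro ε ε' h
      exact part2 ε ε' (he.eqvGen_iff.mp (Quot.eq.mp h))
    · intro q
      induction q using Quot.ind with
      | _ m =>
        obtain ⟨ε, hε⟩ := part3 m.1 m.2
        exact ⟨ε, Quot.sound (he.symm hε)⟩
  rw [← Nat.card_eq_of_bijective f hbij]
  simp [Nat.card_fun]
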